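/- arXiv:1709.07668 — 3 statements merged into one kernel-verified Lean document; each statement's English description precedes it below -/
import Mathlib

section
/- Let m, n ≥ 2 be integers, let G be a finite simple graph on the vertex set [n], and let j ∈ [n]. Then for the lexicographic order <, the initial ideal of the sum 𝔍_G + (x_{1j}, …, x_{mj}) equals the sum of initial ideals: ini_<(𝔍_G + (x_{1j}, …, x_{mj})) = ini_<(𝔍_G) + (x_{1j}, …, x_{mj}). -/
open scoped TensorProduct

namespace GBEI

/-! ### Graph-theoretic notions -/

/-- Number of connected components of a graph. -/
noncomputable def ncomp {V : Type} (G : SimpleGraph V) : ℕ :=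
  Nat.card G.ConnectedComponent

/-- Number of connected components of the induced subgraph on the complement of `T`. -/
noncomputable def ncompDel {V : Type} (G : SimpleGraph V) (T : Finset V) : ℕ :=
  Nat.card (G.induce ((↑T : Set V)ᶜ)).ConnectedComponent

/-- `T` is a cut set: deleting `T` increases the number of connected components. -/
def IsCutSet {V : Type} (G : SimpleGraph V) (T : Finset V) : Prop :=
  ncomp G < ncompDel G T

/-- `T` is a cut set which is minimal with respect to inclusion. -/
def IsMinimalCutSet {V : Type} (G : SimpleGraph V) (T : Finset V) : Prop :=
  IsCutSet G T ∧ ∀ T' ⊆ T, IsCutSet G T' → T' = T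

/-- `aCount G i` is the number of minimal cut sets of `G` of cardinality `i`. -/
noncomputable def aCount {V : Type} (G : SimpleGraph V) (i : ℕ) : ℕ :=
  Set.ncard {T : Finset V | IsMinimalCutSet G T ∧ T.card = i}

/-- `T` has the cut point property: for every `i ∈ T`,
`c(T \ {i}) < c(T)` where `c(T)` is the number of connected components of `G` restricted
to the complement of `T`. -/
def HasCutPointProperty {V : Type} [DecidableEq V] (G : SimpleGraph V) (T : Finset V) : Prop :=
  ∀ i ∈ T, ncompDel G (T.erase i) < ncompDel G T

/-- A graph is chordal if it has no induced cycle of length at least 4. -/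
def Chordal {V : Type} (G : SimpleGraph V) : Prop :=
  ∀ k : ℕ, 4 ≤ k → IsEmpty (SimpleGraph.cycleGraph k ↪g G)

/-- A maximal clique of `G`, as a finite set of vertices. -/
def IsMaxClique {V : Type} (G : SimpleGraph V) (s : Finset V) : Prop :=
  G.IsClique (↑s : Set V) ∧ ∀ t : Finset V, G.IsClique (↑t : Set V) → s ⊆ t → s = t

/-- A generalized block graph: a chordal graph in which, for any three (distinct) maximal
cliques with nonempty common intersection, the pairwise intersections all coincide. -/
def IsGeneralizedBlockGraph {V : Type} [DecidableEq V] (G : SimpleGraph V) : Prop :=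
  Chordal G ∧
    ∀ F₁ F₂ F₃ : Finset V, IsMaxClique G F₁ → IsMaxClique G F₂ → IsMaxClique G F₃ →
      F₁ ≠ F₂ → F₁ ≠ F₃ → F₂ ≠ F₃ → (F₁ ∩ F₂ ∩ F₃).Nonempty →
      F₁ ∩ F₂ = F₂ ∩ F₃ ∧ F₁ ∩ F₃ = F₂ ∩ F₃

/-- A block graph: a chordal graph in which any two distinct maximal cliques meet in at
most one vertex. -/
def IsBlockGraph {V : Type} [DecidableEq V] (G : SimpleGraph V) : Prop :=
  Chordal G ∧
    ∀ F₁ F₂ : Finset V, IsMaxClique G F₁ → IsMaxClique G F₂ → F₁ ≠ F₂ → (F₁ ∩ F₂).card ≤ 1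

/-- The complete graph on a finite set `B` of vertices (with all other vertices isolated). -/
def cliqueOn {V : Type} (B : Finset V) : SimpleGraph V where
  Adj u v := u ≠ v ∧ u ∈ B ∧ v ∈ B
  symm := ⟨fun u v ⟨h1, h2, h3⟩ => ⟨h1.symm, h3, h2⟩⟩
  loopless := ⟨fun u h => h.1 rfl⟩

/-- The graph obtained from `G` by deleting all vertices in `A` (keeping the ambient
vertex type; deleted vertices become isolated). Its edges are exactly the edges of the
induced subgraph of `G` on the complement of `A`. -/
def delVerts {V : Type} (G : SimpleGraph V) (A : Finset V) : SimpleGraph V where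
  Adj u v := G.Adj u v ∧ u ∉ A ∧ v ∉ A
  symm := ⟨fun u v ⟨h1, h2, h3⟩ => ⟨h1.symm, h3, h2⟩⟩
  loopless := ⟨fun u h => G.irrefl h.1⟩

/-! ### The polynomial ring and generalized binomial edge ideals -/

/-- The polynomial ring `K[x_{kj} : 1 ≤ k ≤ m, 1 ≤ j ≤ n]`; the variable type carries the
lexicographic order in which `x_{11}` is the smallest index (hence the largest variable for
the induced lexicographic monomial order). -/
abbrev PolyS (K : Type) [Field K] (m n : ℕ) : Type := MvPolynomial (Fin m ×ₗ Fin n) K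

/-- The variable `x_{kj}`. -/
noncomputable def xv (K : Type) [Field K] {m n : ℕ} (k : Fin m) (j : Fin n) : PolyS K m n :=
  MvPolynomial.X (toLex (k, j))

/-- The 2-minor `[k,l|i,j] = x_{ki} x_{lj} - x_{li} x_{kj}`. -/
noncomputable def pminor (K : Type) [Field K] {m n : ℕ} (k l : Fin m) (i j : Fin n) :
    PolyS K m n :=
  xv K k i * xv K l j - xv K l i * xv K k j

/-- The generalized binomial edge ideal `𝔍_G` of a graph `G` on `[n]`. -/
noncomputable def gbei (K : Type) [Field K] (m : ℕ) {n : ℕ} (G : SimpleGraph (Fin n)) :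
    Ideal (PolyS K m n) :=
  Ideal.span {f | ∃ (k l : Fin m) (i j : Fin n),
    k < l ∧ i < j ∧ G.Adj i j ∧ f = pminor K k l i j}

/-- The ideal generated by the variables `x_{kj}`, `1 ≤ k ≤ m`, `j ∈ A`. -/
noncomputable def varsIdeal (K : Type) [Field K] (m : ℕ) {n : ℕ} (A : Finset (Fin n)) :
    Ideal (PolyS K m n) :=
  Ideal.span {f | ∃ (k : Fin m) (j : Fin n), j ∈ A ∧ f = xv K k j}

/-! ### Lexicographic initial ideals -/

/-- `d` is the exponent vector of the lexicographic leading monomial of `p`, for the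
lexicographic order with `x_{11} > ⋯ > x_{1n} > x_{21} > ⋯ > x_{mn}`. -/
def IsLeadExp (K : Type) [Field K] {m n : ℕ} (p : PolyS K m n)
    (d : (Fin m ×ₗ Fin n) →₀ ℕ) : Prop :=
  d ∈ p.support ∧ ∀ e ∈ p.support, e ≠ d → toLex e < toLex d

/-- The initial ideal of `I` with respect to the lexicographic order: the ideal generated
by the leading monomials of the nonzero elements of `I`. -/
noncomputable def iniIdeal (K : Type) [Field K] {m n : ℕ} (I : Ideal (PolyS K m n)) :
    Ideal (PolyS K m n) :=
  Ideal.span {f | ∃ p ∈ I, ∃ d, IsLeadExp K p d ∧ f = MvPolynomial.monomial d (1 : K)}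

/-! ### Projective dimension, depth and Castelnuovo–Mumford regularity -/

/-- `M` admits a resolution `0 → F_k → ⋯ → F_1 → F_0 → M → 0` by finitely generated
free `R`-modules. -/
def HasFreeResLen (R : Type) [CommRing R] (M : Type) [AddCommGroup M] [Module R M]
    (k : ℕ) : Prop :=
  ∃ (ι : ℕ → Type) (_ : ∀ i, Finite (ι i))
    (d : ∀ i : ℕ, (ι (i + 1) →₀ R) →ₗ[R] (ι i →₀ R)) (ε : (ι 0 →₀ R) →ₗ[R] M),
      (∀ i, k < i → IsEmpty (ι i)) ∧
      Function.Surjective ε ∧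
      Function.Exact (d 0) ε ∧
      ∀ i, Function.Exact (d (i + 1)) (d i)

/-- The projective dimension of `M`: the smallest possible length of a finite free
resolution of `M`. -/
noncomputable def projDim (R : Type) [CommRing R] (M : Type) [AddCommGroup M]
    [Module R M] : ℕ :=
  sInf {k | HasFreeResLen R M k}

/-- The depth of `S/I` (with respect to the irrelevant maximal ideal), via the
Auslander–Buchsbaum formula: `depth S/I = (number of variables) - projdim S/I`. -/
noncomputable def depthQuot {σ : Type} (K : Type) [Field K] (I : Ideal (MvPolynomial σ K)) :
    ℕ :=
  Nat.card σ - projDim (MvPolynomial σ K) (MvPolynomial σ K ⧸ I)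

/-- `S/I` admits a graded free resolution (by finitely generated graded free modules,
with generator degrees `degs`) in which all shifts `j` occurring in homological degree `i`
satisfy `j ≤ r + i`.  The minimum of all such `r` is the Castelnuovo–Mumford regularity
`max { j - i : β_{ij}(S/I) ≠ 0 }`. -/
def HasGradedFreeResRegLE {σ : Type} (K : Type) [Field K] (I : Ideal (MvPolynomial σ K))
    (r : ℕ) : Prop :=
  ∃ (len : ℕ) (ι : ℕ → Type) (_ : ∀ i, Finite (ι i)) (degs : ∀ i, ι i → ℕ)
    (d : ∀ i : ℕ, (ι (i + 1) →₀ MvPolynomial σ K) →ₗ[MvPolynomial σ K] (ι i →₀ MvPolynomial σ K))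
    (ε : (ι 0 →₀ MvPolynomial σ K) →ₗ[MvPolynomial σ K] (MvPolynomial σ K ⧸ I)),
      (∀ i, len < i → IsEmpty (ι i)) ∧
      Function.Surjective ε ∧
      Function.Exact (d 0) ε ∧
      (∀ i, Function.Exact (d (i + 1)) (d i)) ∧
      (∀ a : ι 0, ∃ p : MvPolynomial σ K,
        p.IsHomogeneous (degs 0 a) ∧ ε (Finsupp.single a 1) = Ideal.Quotient.mk I p) ∧
      (∀ (i : ℕ) (a : ι (i + 1)) (b : ι i),
        (d i (Finsupp.single a 1)) b = 0 ∨
        ∃ e, e + degs i b = degs (i + 1) a ∧ ((d i (Finsupp.single a 1)) b).IsHomogeneous e) ∧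
      (∀ (i : ℕ) (a : ι i), degs i a ≤ r + i)

/-- The Castelnuovo–Mumford regularity of `S/I`. -/
noncomputable def regQuot {σ : Type} (K : Type) [Field K] (I : Ideal (MvPolynomial σ K)) :
    ℕ :=
  sInf {r | HasGradedFreeResRegLE K I r}

/-- The height of a prime ideal `P` (junk value `0` if `P` is not prime). -/
noncomputable def primeHeight {R : Type} [CommRing R] (P : Ideal R) : ℕ∞ :=
  ⨆ h : P.IsPrime, Order.height (⟨P, h⟩ : PrimeSpectrum R)

/-- An ideal is unmixed if all of its minimal primes have the same height. -/
def IsUnmixed {R : Type} [CommRing R] (I : Ideal R) : Prop :=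
  ∀ P ∈ I.minimalPrimes, ∀ Q ∈ I.minimalPrimes, primeHeight P = primeHeight Q

end GBEI

namespace GBEI

/-- The generalized binomial edge ideal of (the restriction of) `G` inside the polynomial
ring `K[x_{kj} : 1 ≤ k ≤ m, j ∈ V]` on a subset `V` of the vertices. -/
noncomputable def gbeiOn (K : Type) [Field K] (m : ℕ) {n : ℕ} (G : SimpleGraph (Fin n))
    (V : Set (Fin n)) : Ideal (MvPolynomial (Fin m × V) K) :=
  Ideal.span {f | ∃ (k l : Fin m) (i j : V),
    k < l ∧ (i : Fin n) < (j : Fin n) ∧ G.Adj (i : Fin n) (j : Fin n) ∧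
    f = MvPolynomial.X (k, i) * MvPolynomial.X (l, j) -
        MvPolynomial.X (l, i) * MvPolynomial.X (k, j)}

/-- The degree-`dd` homogeneous component of `S/I`, the image of the space of homogeneous
polynomials of degree `dd`. -/
noncomputable def quotDeg {σ : Type} (K : Type) [Field K] (I : Ideal (MvPolynomial σ K))
    (dd : ℕ) : Submodule K (MvPolynomial σ K ⧸ I) :=
  Submodule.map (Ideal.Quotient.mkₐ K I).toLinearMap (MvPolynomial.homogeneousSubmodule σ K dd)

/-- The minimal prime `P_T(G)` of `𝔍_G` associated with a set `T` having the cut point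
property: it is generated by the variables `x_{kj}`, `j ∈ T`, together with the 2-minors
`[k,l|i,j]` for all pairs `i < j` of vertices lying in a common connected component of the
restriction of `G` to the complement of `T`. -/
noncomputable def cutPrime (K : Type) [Field K] (m : ℕ) {n : ℕ} (G : SimpleGraph (Fin n))
    (T : Finset (Fin n)) : Ideal (PolyS K m n) :=
  Ideal.span ({f | ∃ (k : Fin m) (j : Fin n), j ∈ T ∧ f = xv K k j} ∪
    {f | ∃ (k l : Fin m) (i j : Fin n) (hi : i ∈ ((↑T : Set (Fin n))ᶜ))
      (hj : j ∈ ((↑T : Set (Fin n))ᶜ)),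
      k < l ∧ i < j ∧ (G.induce ((↑T : Set (Fin n))ᶜ)).Reachable ⟨i, hi⟩ ⟨j, hj⟩ ∧
      f = pminor K k l i j})


open scoped Classical

-- auxiliary development

noncomputable def killj (K : Type) [Field K] {m n : ℕ} (j : Fin n) :
    PolyS K m n →ₐ[K] PolyS K m n :=
  MvPolynomial.aeval (fun v => if (ofLex v).2 = j then 0 else MvPolynomial.X v)

lemma killj_xv (K : Type) [Field K] {m n : ℕ} (j : Fin n) (k : Fin m) (i : Fin n) :
    killj K j (xv K k i) = if i = j then 0 else xv K k i := by
  by_cases h : i = j <;> simp [killj, xv, MvPolynomial.aeval_X, h]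

lemma coeff_killj (K : Type) [Field K] {m n : ℕ} (j : Fin n) (p : PolyS K m n)
    (e : (Fin m ×ₗ Fin n) →₀ ℕ) :
    (killj K j p).coeff e =
      if ∀ k : Fin m, e (toLex (k, j)) = 0 then p.coeff e else 0 := by
  induction p using MvPolynomial.induction_on' with
  | add p q hp hq =>
    rw [map_add, MvPolynomial.coeff_add, MvPolynomial.coeff_add, hp, hq]
    split_ifs <;> simp
  | monomial u a =>
    by_cases hu : ∀ k : Fin m, u (toLex (k, j)) = 0
    · have : killj K j (MvPolynomial.monomial u a) = MvPolynomial.monomial u a := by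
        rw [killj, MvPolynomial.aeval_monomial]
        have hprod : (u.prod fun v e =>
            (if (ofLex v).2 = j then (0 : PolyS K m n) else MvPolynomial.X v) ^ e)
            = u.prod fun v e => (MvPolynomial.X v) ^ e := by
          apply Finsupp.prod_congr
          intro v hv
          have : ¬ (ofLex v).2 = j := by
            intro h
            apply Finsupp.mem_support_iff.mp hv
            have hv' : v = toLex ((ofLex v).1, j) := by
              cases' v with a b; simp only [ofLex] at h ⊢; subst h; rfl
            rw [hv']; exact hu (ofLex v).1
          rw [if_neg this]
        rw [hprod, MvPolynomial.algebraMap_eq, ← MvPolynomial.monomial_eq]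
      rw [this]
      by_cases he : ∀ k : Fin m, e (toLex (k, j)) = 0
      · rw [if_pos he]
      · rw [if_neg he]
        rw [MvPolynomial.coeff_monomial, if_neg]
        intro h; exact he (h ▸ hu)
    · push_neg at hu
      obtain ⟨k0, hk0⟩ := hu
      have : killj K j (MvPolynomial.monomial u a) = 0 := by
        rw [killj, MvPolynomial.aeval_monomial]
        have : (u.prod fun v e =>
            (if (ofLex v).2 = j then (0 : PolyS K m n) else MvPolynomial.X v) ^ e) = 0 := by
          rw [Finsupp.prod]
          apply Finset.prod_eq_zero (Finsupp.mem_support_iff.mpr hk0)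
          simp [ofLex_toLex, zero_pow hk0]
        rw [this, mul_zero]
      rw [this, MvPolynomial.coeff_zero]
      by_cases he : ∀ k : Fin m, e (toLex (k, j)) = 0
      · rw [if_pos he, MvPolynomial.coeff_monomial, if_neg]
        · intro h; subst h; exact hk0 (he k0)
      · rw [if_neg he]

lemma killj_mem_gbei (K : Type) [Field K] {m n : ℕ} (G : SimpleGraph (Fin n)) (j : Fin n)
    {q : PolyS K m n} (hq : q ∈ gbei K m G) : killj K j q ∈ gbei K m G := by
  have h1 : killj K j q ∈ Ideal.map (killj K j).toRingHom (gbei K m G) :=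
    Ideal.mem_map_of_mem _ hq
  rw [gbei, Ideal.map_span] at h1
  refine Ideal.span_le.mpr ?_ h1
  rintro f ⟨g, ⟨k, l, i, i', hkl, hii, hadj, rfl⟩, rfl⟩
  show killj K j (pminor K k l i i') ∈ gbei K m G
  rcases eq_or_ne i j with hi | hi
  · simp [pminor, killj_xv, hi]
  rcases eq_or_ne i' j with hi' | hi'
  · simp [pminor, killj_xv, hi, hi']
  · rw [pminor, map_sub, map_mul, map_mul, killj_xv, killj_xv, killj_xv, killj_xv]
    simp only [if_neg hi, if_neg hi']
    exact Ideal.subset_span ⟨k, l, i, i', hkl, hii, hadj, rfl⟩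

lemma iniIdeal_mono (K : Type) [Field K] {m n : ℕ} {I J : Ideal (PolyS K m n)} (h : I ≤ J) :
    iniIdeal K I ≤ iniIdeal K J := by
  apply Ideal.span_mono
  rintro f ⟨p, hp, d, hd, rfl⟩
  exact ⟨p, h hp, d, hd, rfl⟩


/-- `ini_<(𝔍_G + (x_{1j},…,x_{mj})) = ini_<(𝔍_G) + (x_{1j},…,x_{mj})`. -/
theorem iniIdeal_gbei_add_vars_single (K : Type) [Field K] (m n : ℕ) (hm : 2 ≤ m) (hn : 2 ≤ n)
    (G : SimpleGraph (Fin n)) (j : Fin n) :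
    iniIdeal K (gbei K m G + Ideal.span {f : PolyS K m n | ∃ k : Fin m, f = xv K k j}) =
      iniIdeal K (gbei K m G) + Ideal.span {f : PolyS K m n | ∃ k : Fin m, f = xv K k j} := by
  set L : Ideal (PolyS K m n) := Ideal.span {f : PolyS K m n | ∃ k : Fin m, f = xv K k j}
    with hL
  have hkillL : ∀ r ∈ L, killj K j r = 0 := by
    intro r hr
    have hker : L ≤ RingHom.ker (killj K j).toRingHom := by
      rw [hL]
      apply Ideal.span_le.mpr
      rintro f ⟨k, rfl⟩
      show killj K j (xv K k j) = 0
      rw [killj_xv, if_pos rfl]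
    exact hker hr
  apply le_antisymm
  · rw [iniIdeal]
    apply Ideal.span_le.mpr
    rintro f ⟨p, hp, d, hd, rfl⟩
    by_cases hc : ∀ k : Fin m, d (toLex (k, j)) = 0
    · -- lead monomial is clean: comes from killj p ∈ gbei
      set p' := killj K j p with hp'
      have hdp : p.coeff d ≠ 0 := MvPolynomial.mem_support_iff.mp hd.1
      have hcoeffd : p'.coeff d = p.coeff d := by rw [hp', coeff_killj, if_pos hc]
      have hdp' : d ∈ p'.support := MvPolynomial.mem_support_iff.mpr (hcoeffd ▸ hdp)
      have hsub : p'.support ⊆ p.support := by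
        intro e he
        have := MvPolynomial.mem_support_iff.mp he
        rw [hp', coeff_killj] at this
        by_cases h : ∀ k : Fin m, e (toLex (k, j)) = 0
        · rw [if_pos h] at this; exact MvPolynomial.mem_support_iff.mpr this
        · rw [if_neg h] at this; exact absurd rfl this
      have hlead : IsLeadExp K p' d :=
        ⟨hdp', fun e he hne => hd.2 e (hsub he) hne⟩
      have hpI : p' ∈ gbei K m G := by
        rw [Ideal.add_eq_sup] at hp
        obtain ⟨q, hq, r, hr, rfl⟩ := Submodule.mem_sup.mp hp
        rw [hp', map_add, hkillL r hr, add_zero]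
        exact killj_mem_gbei K G j hq
      rw [Ideal.add_eq_sup]
      exact Submodule.mem_sup_left (Ideal.subset_span ⟨p', hpI, d, hlead, rfl⟩)
    · -- lead monomial involves x_{kj}: it lies in L
      push_neg at hc
      obtain ⟨k, hk⟩ := hc
      rw [Ideal.add_eq_sup]
      apply Submodule.mem_sup_right
      have hle : Finsupp.single (toLex (k, j)) 1 ≤ d :=
        Finsupp.single_le_iff.mpr (Nat.one_le_iff_ne_zero.mpr hk)
      have : MvPolynomial.monomial d (1 : K) =
          MvPolynomial.monomial (d - Finsupp.single (toLex (k, j)) 1) (1 : K) * xv K k j := by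
        show _ = _ * MvPolynomial.monomial (Finsupp.single (toLex (k, j)) 1) (1 : K)
        rw [MvPolynomial.monomial_mul, one_mul, tsub_add_cancel_of_le hle]
      rw [this]
      exact Ideal.mul_mem_left _ _ (Ideal.subset_span ⟨k, rfl⟩)
  · rw [Ideal.add_eq_sup]
    apply sup_le
    · exact iniIdeal_mono K (by rw [Ideal.add_eq_sup]; exact le_sup_left)
    · apply Ideal.span_le.mpr
      rintro f ⟨k, rfl⟩
      apply Ideal.subset_span
      refine ⟨xv K k j, ?_, Finsupp.single (toLex (k, j)) 1, ⟨?_, ?_⟩, rfl⟩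
      · rw [Ideal.add_eq_sup]; exact Submodule.mem_sup_right (Ideal.subset_span ⟨k, rfl⟩)
      · rw [xv, MvPolynomial.support_X]; exact Finset.mem_singleton_self _
      · intro e he hne
        rw [xv, MvPolynomial.support_X, Finset.mem_singleton] at he
        exact absurd he hne

end GBEI
end

section
/- Let m, n ≥ 2 be integers, let G be a finite simple graph on the vertex set [n], and let A ⊆ [n] be any subset of vertices. Then for the lexicographic order <, ini_<(𝔍_G + (x_{kj} : 1 ≤ k ≤ m, j ∈ A)) = ini_<(𝔍_G) + (x_{kj} : 1 ≤ k ≤ m, j ∈ A). -/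
open scoped TensorProduct

namespace GBEI

section AuxKill

open MvPolynomial

variable {K : Type} [Field K] {m n : ℕ}

/-- The substitution homomorphism sending `x_{kj} ↦ 0` for `j ∈ A` and fixing all other
variables. -/
noncomputable def killA (K : Type) [Field K] (m : ℕ) {n : ℕ} (A : Finset (Fin n)) :
    PolyS K m n →ₐ[K] PolyS K m n :=
  MvPolynomial.aeval fun v : Fin m ×ₗ Fin n =>
    if (ofLex v).2 ∈ A then (0 : PolyS K m n) else MvPolynomial.X v

lemma killA_X {A : Finset (Fin n)} (v : Fin m ×ₗ Fin n) :
    killA K m A (MvPolynomial.X v)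
      = if (ofLex v).2 ∈ A then (0 : PolyS K m n) else MvPolynomial.X v := by
  simp [killA]

lemma killA_monomial_clean {A : Finset (Fin n)} {d : (Fin m ×ₗ Fin n) →₀ ℕ} {c : K}
    (h : ∀ v ∈ d.support, (ofLex v).2 ∉ A) :
    killA K m A (monomial d c) = monomial d c := by
  rw [killA, aeval_monomial, monomial_eq, algebraMap_eq]
  congr 1
  refine Finsupp.prod_congr fun v hv => ?_
  rw [if_neg (h v hv)]

lemma killA_monomial_dirty {A : Finset (Fin n)} {d : (Fin m ×ₗ Fin n) →₀ ℕ} {c : K}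
    {v : Fin m ×ₗ Fin n} (hv : v ∈ d.support) (hA : (ofLex v).2 ∈ A) :
    killA K m A (monomial d c) = 0 := by
  rw [killA, aeval_monomial]
  have h0 : (d.prod fun i k =>
      (if (ofLex i).2 ∈ A then (0 : PolyS K m n) else X i) ^ k) = 0 := by
    rw [Finsupp.prod]
    apply Finset.prod_eq_zero hv
    rw [if_pos hA, zero_pow (Finsupp.mem_support_iff.mp hv)]
  rw [h0, mul_zero]

lemma coeff_killA {A : Finset (Fin n)} (p : PolyS K m n) (e : (Fin m ×ₗ Fin n) →₀ ℕ)
    [Decidable (∀ v ∈ e.support, (ofLex v).2 ∉ A)] :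
    coeff e (killA K m A p)
      = if (∀ v ∈ e.support, (ofLex v).2 ∉ A) then coeff e p else 0 := by
  classical
  induction p using MvPolynomial.induction_on' with
  | monomial u c =>
    by_cases hu : ∀ v ∈ u.support, (ofLex v).2 ∉ A
    · rw [killA_monomial_clean hu]
      by_cases he : ∀ v ∈ e.support, (ofLex v).2 ∉ A
      · rw [if_pos he]
      · rw [if_neg he, coeff_monomial, if_neg]
        rintro rfl; exact he hu
    · push_neg at hu
      obtain ⟨v, hv, hA⟩ := hu
      rw [killA_monomial_dirty hv hA, coeff_zero]
      by_cases he : ∀ v ∈ e.support, (ofLex v).2 ∉ A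
      · rw [if_pos he, coeff_monomial, if_neg]
        rintro rfl; exact he v hv hA
      · rw [if_neg he]
  | add p q hp hq =>
    rw [map_add, coeff_add, hp, hq, coeff_add]
    split <;> simp

lemma monomial_mem_varsIdeal {A : Finset (Fin n)} {d : (Fin m ×ₗ Fin n) →₀ ℕ} (c : K)
    {v : Fin m ×ₗ Fin n} (hv : v ∈ d.support) (hA : (ofLex v).2 ∈ A) :
    monomial d c ∈ varsIdeal K m A := by
  have hd : d = (d - Finsupp.single v 1) + Finsupp.single v 1 := by
    ext w
    have h1 := Finsupp.mem_support_iff.mp hv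
    simp only [Finsupp.coe_add, Finsupp.coe_tsub, Pi.add_apply, Pi.sub_apply,
      Finsupp.single_apply]
    split
    · next h => subst h; omega
    · omega
  have : monomial d c = monomial (d - Finsupp.single v 1) c * MvPolynomial.X v := by
    rw [MvPolynomial.X, monomial_mul, mul_one, ← hd]
  rw [this]
  refine Ideal.mul_mem_left _ _ (Ideal.subset_span ?_)
  exact ⟨(ofLex v).1, (ofLex v).2, hA, rfl⟩

lemma sub_killA_mem_varsIdeal {A : Finset (Fin n)} (p : PolyS K m n) :
    p - killA K m A p ∈ varsIdeal K m A := by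
  classical
  induction p using MvPolynomial.induction_on' with
  | monomial u c =>
    by_cases hu : ∀ v ∈ u.support, (ofLex v).2 ∉ A
    · rw [killA_monomial_clean hu, sub_self]; exact Ideal.zero_mem _
    · push_neg at hu
      obtain ⟨v, hv, hA⟩ := hu
      rw [killA_monomial_dirty hv hA, sub_zero]
      exact monomial_mem_varsIdeal c hv hA
  | add p q hp hq =>
    have h : (p + q) - killA K m A (p + q)
        = (p - killA K m A p) + (q - killA K m A q) := by
      rw [map_add]; ring
    rw [h]
    exact Ideal.add_mem _ hp hq

lemma killA_mem_gbei {A : Finset (Fin n)} {G : SimpleGraph (Fin n)} {p : PolyS K m n}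
    (hp : p ∈ gbei K m G) : killA K m A p ∈ gbei K m G := by
  have hle : gbei K m G ≤ Ideal.comap (killA K m A).toRingHom (gbei K m G) := by
    rw [gbei, Ideal.span_le]
    rintro f ⟨k, l, i, j, hkl, hij, hadj, rfl⟩
    simp only [SetLike.mem_coe, Ideal.mem_comap, AlgHom.toRingHom_eq_coe, RingHom.coe_coe]
    have hexp : killA K m A (pminor K k l i j)
        = (if i ∈ A then 0 else X (toLex (k, i))) * (if j ∈ A then 0 else X (toLex (l, j)))
          - (if i ∈ A then 0 else X (toLex (l, i))) *
            (if j ∈ A then 0 else X (toLex (k, j))) := by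
      rw [pminor, map_sub, map_mul, map_mul]
      simp only [xv, killA_X]
      rfl
    by_cases hi : i ∈ A
    · rw [hexp, if_pos hi, if_pos hi, zero_mul, zero_mul, sub_zero]
      exact Ideal.zero_mem _
    · by_cases hj : j ∈ A
      · rw [hexp, if_pos hj, if_pos hj, mul_zero, mul_zero, sub_zero]
        exact Ideal.zero_mem _
      · rw [hexp, if_neg hi, if_neg hi, if_neg hj, if_neg hj]
        exact Ideal.subset_span ⟨k, l, i, j, hkl, hij, hadj, rfl⟩
  exact hle hp

lemma killA_eq_zero_of_mem_varsIdeal {A : Finset (Fin n)} {p : PolyS K m n}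
    (hp : p ∈ varsIdeal K m A) : killA K m A p = 0 := by
  have hle : varsIdeal K m A ≤ RingHom.ker (killA K m A).toRingHom := by
    rw [varsIdeal, Ideal.span_le]
    rintro f ⟨k, j, hj, rfl⟩
    simp only [SetLike.mem_coe, RingHom.mem_ker, AlgHom.toRingHom_eq_coe, RingHom.coe_coe]
    rw [xv, killA_X, if_pos]
    exact hj
  exact hle hp

end AuxKill

/-- for any subset `A` of vertices,
`ini_<(𝔍_G + (x_{kj} : k, j ∈ A)) = ini_<(𝔍_G) + (x_{kj} : k, j ∈ A)`. -/
theorem iniIdeal_gbei_add_vars (K : Type) [Field K] (m n : ℕ) (hm : 2 ≤ m) (hn : 2 ≤ n)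
    (G : SimpleGraph (Fin n)) (A : Finset (Fin n)) :
    iniIdeal K (gbei K m G + varsIdeal K m A) =
      iniIdeal K (gbei K m G) + varsIdeal K m A := by
  classical
  apply le_antisymm
  · rw [iniIdeal, Ideal.span_le]
    rintro f ⟨p, hp, d, hd, rfl⟩
    by_cases hclean : ∀ v ∈ d.support, (ofLex v).2 ∉ A
    · obtain ⟨g, hg, h, hh, hgh⟩ := Submodule.mem_sup.mp hp
      have hpk : killA K m A p ∈ gbei K m G := by
        have heq : killA K m A p = killA K m A g := by
          rw [← hgh, map_add, killA_eq_zero_of_mem_varsIdeal hh, add_zero]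
        rw [heq]
        exact killA_mem_gbei hg
      have hdk : IsLeadExp K (killA K m A p) d := by
        constructor
        · rw [MvPolynomial.mem_support_iff, coeff_killA, if_pos hclean]
          exact MvPolynomial.mem_support_iff.mp hd.1
        · intro e he hne
          refine hd.2 e ?_ hne
          rw [MvPolynomial.mem_support_iff] at he ⊢
          rw [coeff_killA] at he
          by_cases hce : ∀ v ∈ e.support, (ofLex v).2 ∉ A
          · rwa [if_pos hce] at he
          · rw [if_neg hce] at he
            exact absurd rfl he
      exact Submodule.mem_sup_left (Ideal.subset_span ⟨_, hpk, d, hdk, rfl⟩)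
    · push_neg at hclean
      obtain ⟨v, hv, hA⟩ := hclean
      exact Submodule.mem_sup_right (monomial_mem_varsIdeal 1 hv hA)
  · refine sup_le ?_ ?_
    · rw [iniIdeal, Ideal.span_le]
      rintro f ⟨p, hp, d, hd, rfl⟩
      exact Ideal.subset_span ⟨p, Submodule.mem_sup_left hp, d, hd, rfl⟩
    · rw [varsIdeal, Ideal.span_le]
      rintro f ⟨k, j, hj, rfl⟩
      refine Ideal.subset_span
        ⟨xv K k j,
         Submodule.mem_sup_right (Ideal.subset_span ⟨k, j, hj, rfl⟩),
         Finsupp.single (toLex (k, j)) 1, ⟨?_, ?_⟩, ?_⟩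
      · rw [xv, MvPolynomial.support_X]
        exact Finset.mem_singleton_self _
      · intro e he hne
        rw [xv, MvPolynomial.support_X, Finset.mem_singleton] at he
        exact absurd he hne
      · rw [xv, MvPolynomial.X]

end GBEI
end

section
/- In the leaf-order setup for a connected generalized block graph G (with leaf F_r, branches F_{t_1},…,F_{t_q}, common intersection A, merged graph G', and G'' the induced subgraph of G on [n]∖A), the generalized binomial edge ideal decomposes as 𝔍_G = 𝔍_{G'} ∩ ((x_{kj} : 1 ≤ k ≤ m, j ∈ A) + 𝔍_{G''}). -/
open scoped TensorProduct

namespace GBEI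

/-! ### Auxiliary lemmas for Statement 13 -/

section Aux13

variable (K : Type) [Field K] {m n : ℕ}

lemma pminor_swap_rows (k l : Fin m) (i j : Fin n) :
    pminor K k l i j = -pminor K l k i j := by unfold pminor; ring

lemma pminor_swap_cols (k l : Fin m) (i j : Fin n) :
    pminor K k l i j = -pminor K k l j i := by unfold pminor; ring

lemma pminor_self (k : Fin m) (i j : Fin n) : pminor K k k i j = 0 := by
  unfold pminor; ring

lemma pminor_mem {G : SimpleGraph (Fin n)} {k l : Fin m} {i j : Fin n}
    (hkl : k ≠ l) (hadj : G.Adj i j) : pminor K k l i j ∈ gbei K m G := by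
  have hij : i ≠ j := hadj.ne
  rcases hkl.lt_or_gt with h1 | h1 <;> rcases hij.lt_or_gt with h2 | h2
  · exact Ideal.subset_span ⟨k, l, i, j, h1, h2, hadj, rfl⟩
  · rw [pminor_swap_cols]
    exact neg_mem (Ideal.subset_span ⟨k, l, j, i, h1, h2, hadj.symm, rfl⟩)
  · rw [pminor_swap_rows]
    exact neg_mem (Ideal.subset_span ⟨l, k, i, j, h1, h2, hadj, rfl⟩)
  · rw [pminor_swap_rows, pminor_swap_cols, neg_neg]
    exact Ideal.subset_span ⟨l, k, j, i, h1, h2, hadj.symm, rfl⟩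

lemma key_identity (p k l : Fin m) (a u w : Fin n) :
    xv K p a * pminor K k l u w =
      -(xv K p w * pminor K k l a u) - xv K k u * pminor K l p a w
        + xv K l u * pminor K k p a w := by
  unfold pminor xv; ring

/-- The ideal generated by the "new" minors: minors on column pairs `u, w` outside `A`
such that both `u` and `w` are adjacent in `G` to every vertex of `A`. -/
noncomputable def Nideal (K : Type) [Field K] (m : ℕ) {n : ℕ} (G : SimpleGraph (Fin n))
    (A : Finset (Fin n)) : Ideal (PolyS K m n) :=
  Ideal.span {f | ∃ (k l : Fin m) (u w : Fin n), k ≠ l ∧ u ∉ A ∧ w ∉ A ∧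
    (∀ a ∈ A, G.Adj a u) ∧ (∀ a ∈ A, G.Adj a w) ∧ f = pminor K k l u w}

lemma gbei_mono {G H : SimpleGraph (Fin n)} (h : ∀ i j, G.Adj i j → H.Adj i j) :
    gbei K m G ≤ gbei K m H := by
  apply Ideal.span_mono
  rintro f ⟨k, l, i, j, h1, h2, h3, h4⟩
  exact ⟨k, l, i, j, h1, h2, h i j h3, h4⟩

lemma gbei_delVerts_le (G : SimpleGraph (Fin n)) (A : Finset (Fin n)) :
    gbei K m (delVerts G A) ≤ gbei K m G :=
  gbei_mono K fun _ _ h => h.1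

/-- The key Plücker-type consequence: a variable with column in `A` times a new minor
lies in `𝔍_G`. -/
lemma varsIdeal_mul_Nideal (G : SimpleGraph (Fin n)) (A : Finset (Fin n)) :
    ∀ p ∈ varsIdeal K m A, ∀ x ∈ Nideal K m G A, p * x ∈ gbei K m G := by
  intro p hp
  induction hp using Submodule.span_induction with
  | mem p hp =>
    obtain ⟨pp, a, ha, rfl⟩ := hp
    intro x hx
    induction hx using Submodule.span_induction with
    | mem x hxgen =>
      obtain ⟨k, l, u, w, hkl, hu, hw, hau, haw, rfl⟩ := hxgen
      rw [key_identity]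
      have t1 : xv K pp w * pminor K k l a u ∈ gbei K m G :=
        Ideal.mul_mem_left _ _ (pminor_mem K hkl (hau a ha))
      have t2 : xv K k u * pminor K l pp a w ∈ gbei K m G := by
        by_cases hlp : l = pp
        · rw [hlp, pminor_self, mul_zero]; exact Ideal.zero_mem _
        · exact Ideal.mul_mem_left _ _ (pminor_mem K hlp (haw a ha))
      have t3 : xv K l u * pminor K k pp a w ∈ gbei K m G := by
        by_cases hkp : k = pp
        · rw [hkp, pminor_self, mul_zero]; exact Ideal.zero_mem _
        · exact Ideal.mul_mem_left _ _ (pminor_mem K hkp (haw a ha))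
      exact Ideal.add_mem _ (Ideal.sub_mem _ (neg_mem t1) t2) t3
    | zero => rw [mul_zero]; exact Ideal.zero_mem _
    | add x y _ _ hx hy => rw [mul_add]; exact Ideal.add_mem _ hx hy
    | smul r x _ hx =>
      have heq : xv K pp a * (r • x) = r * (xv K pp a * x) := by
        rw [smul_eq_mul]; ring
      rw [heq]; exact Ideal.mul_mem_left _ _ hx
  | zero => intro x _; rw [zero_mul]; exact Ideal.zero_mem _
  | add p q _ _ hp hq => intro x hx; rw [add_mul]; exact Ideal.add_mem _ (hp x hx) (hq x hx)
  | smul r p _ hp =>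
    intro x hx
    rw [smul_eq_mul, mul_assoc]
    exact Ideal.mul_mem_left _ _ (hp x hx)

/-- The retraction killing the variables with column in `A`. -/
noncomputable def piA (K : Type) [Field K] (m : ℕ) {n : ℕ} (A : Finset (Fin n)) :
    PolyS K m n →ₐ[K] PolyS K m n :=
  MvPolynomial.aeval fun v => if (ofLex v).2 ∈ A then 0 else MvPolynomial.X v

lemma piA_X_mem (A : Finset (Fin n)) {k : Fin m} {a : Fin n} (ha : a ∈ A) :
    piA K m A (xv K k a) = 0 := by
  simp [piA, xv, MvPolynomial.aeval_X, ha]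

lemma piA_X_not_mem (A : Finset (Fin n)) {k : Fin m} {j : Fin n} (hj : j ∉ A) :
    piA K m A (xv K k j) = xv K k j := by
  simp [piA, xv, MvPolynomial.aeval_X, hj]

lemma piA_pminor (A : Finset (Fin n)) {k l : Fin m} {i j : Fin n}
    (hi : i ∉ A) (hj : j ∉ A) :
    piA K m A (pminor K k l i j) = pminor K k l i j := by
  unfold pminor
  rw [map_sub, map_mul, map_mul, piA_X_not_mem K A hi, piA_X_not_mem K A hj,
    piA_X_not_mem K A hi, piA_X_not_mem K A hj]

lemma sub_piA_mem (A : Finset (Fin n)) (p : PolyS K m n) :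
    p - piA K m A p ∈ varsIdeal K m A := by
  induction p using MvPolynomial.induction_on with
  | C a =>
    have hC : piA K m A (MvPolynomial.C a) = MvPolynomial.C a := by
      simp [piA, MvPolynomial.aeval_C, MvPolynomial.algebraMap_eq]
    rw [hC, sub_self]
    exact Ideal.zero_mem _
  | add p q hp hq =>
    rw [map_add]
    have : p + q - (piA K m A p + piA K m A q) = (p - piA K m A p) + (q - piA K m A q) := by
      ring
    rw [this]; exact Ideal.add_mem _ hp hq
  | mul_X p v hp =>
    rw [map_mul]
    have heq : p * MvPolynomial.X v - piA K m A p * piA K m A (MvPolynomial.X v) =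
        p * (MvPolynomial.X v - piA K m A (MvPolynomial.X v)) +
          (p - piA K m A p) * piA K m A (MvPolynomial.X v) := by ring
    rw [heq]
    apply Ideal.add_mem
    · by_cases hv : (ofLex v).2 ∈ A
      · have : piA K m A (MvPolynomial.X v) = 0 := by simp [piA, MvPolynomial.aeval_X, hv]
        rw [this, sub_zero]
        refine Ideal.mul_mem_left _ _ (Ideal.subset_span ?_)
        exact ⟨(ofLex v).1, (ofLex v).2, hv, rfl⟩
      · have : piA K m A (MvPolynomial.X v) = MvPolynomial.X v := by
          simp [piA, MvPolynomial.aeval_X, hv]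
        rw [this, sub_self, mul_zero]; exact Ideal.zero_mem _
    · exact Ideal.mul_mem_right _ _ hp

lemma piA_varsIdeal (A : Finset (Fin n)) {p : PolyS K m n} (hp : p ∈ varsIdeal K m A) :
    piA K m A p = 0 := by
  induction hp using Submodule.span_induction with
  | mem p hp =>
    obtain ⟨k, a, ha, rfl⟩ := hp
    exact piA_X_mem K A ha
  | zero => exact map_zero _
  | add p q _ _ hp hq => rw [map_add, hp, hq, add_zero]
  | smul r p _ hp => rw [smul_eq_mul, map_mul, hp, mul_zero]

lemma piA_delVerts (G : SimpleGraph (Fin n)) (A : Finset (Fin n))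
    {p : PolyS K m n} (hp : p ∈ gbei K m (delVerts G A)) :
    piA K m A p ∈ gbei K m (delVerts G A) := by
  induction hp using Submodule.span_induction with
  | mem p hp =>
    obtain ⟨k, l, i, j, h1, h2, h3, rfl⟩ := hp
    rw [piA_pminor K A h3.2.1 h3.2.2]
    exact Ideal.subset_span ⟨k, l, i, j, h1, h2, h3, rfl⟩
  | zero => rw [map_zero]; exact Ideal.zero_mem _
  | add p q _ _ hp hq => rw [map_add]; exact Ideal.add_mem _ hp hq
  | smul r p _ hp => rw [smul_eq_mul, map_mul]; exact Ideal.mul_mem_left _ _ hp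

lemma piA_Nideal (G : SimpleGraph (Fin n)) (A : Finset (Fin n))
    {x : PolyS K m n} (hx : x ∈ Nideal K m G A) :
    piA K m A x ∈ Nideal K m G A := by
  induction hx using Submodule.span_induction with
  | mem x hx =>
    obtain ⟨k, l, u, w, hkl, hu, hw, hau, haw, rfl⟩ := hx
    rw [piA_pminor K A hu hw]
    exact Ideal.subset_span ⟨k, l, u, w, hkl, hu, hw, hau, haw, rfl⟩
  | zero => rw [map_zero]; exact Ideal.zero_mem _
  | add p q _ _ hp hq => rw [map_add]; exact Ideal.add_mem _ hp hq
  | smul r p _ hp => rw [smul_eq_mul, map_mul]; exact Ideal.mul_mem_left _ _ hp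

lemma sub_piA_Nideal (G : SimpleGraph (Fin n)) (A : Finset (Fin n))
    {x : PolyS K m n} (hx : x ∈ Nideal K m G A) :
    x - piA K m A x ∈ gbei K m G := by
  induction hx using Submodule.span_induction with
  | mem x hx =>
    obtain ⟨k, l, u, w, hkl, hu, hw, hau, haw, rfl⟩ := hx
    rw [piA_pminor K A hu hw, sub_self]
    exact Ideal.zero_mem _
  | zero => rw [map_zero, sub_zero]; exact Ideal.zero_mem _
  | add p q hpm hqm hp hq =>
    rw [map_add]
    have : p + q - (piA K m A p + piA K m A q) = (p - piA K m A p) + (q - piA K m A q) := by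
      ring
    rw [this]; exact Ideal.add_mem _ hp hq
  | smul r p hpm hp =>
    rw [smul_eq_mul, map_mul]
    have : r * p - piA K m A r * piA K m A p =
        r * (p - piA K m A p) + (r - piA K m A r) * piA K m A p := by ring
    rw [this]
    exact Ideal.add_mem _ (Ideal.mul_mem_left _ _ hp)
      (varsIdeal_mul_Nideal K G A _ (sub_piA_mem K A r) _ (piA_Nideal K G A hpm))

lemma gbei_le_vars_add_del (G : SimpleGraph (Fin n)) (A : Finset (Fin n)) :
    gbei K m G ≤ varsIdeal K m A + gbei K m (delVerts G A) := by
  rw [Ideal.add_eq_sup]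
  apply Ideal.span_le.mpr
  rintro f ⟨k, l, i, j, h1, h2, h3, rfl⟩
  by_cases hi : i ∈ A
  · apply Submodule.mem_sup_left
    unfold pminor
    exact Ideal.sub_mem _
      (Ideal.mul_mem_right _ _ (Ideal.subset_span ⟨k, i, hi, rfl⟩))
      (Ideal.mul_mem_right _ _ (Ideal.subset_span ⟨l, i, hi, rfl⟩))
  · by_cases hj : j ∈ A
    · apply Submodule.mem_sup_left
      unfold pminor
      exact Ideal.sub_mem _
        (Ideal.mul_mem_left _ _ (Ideal.subset_span ⟨l, j, hj, rfl⟩))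
        (Ideal.mul_mem_left _ _ (Ideal.subset_span ⟨k, j, hj, rfl⟩))
    · exact Submodule.mem_sup_right
        (Ideal.subset_span ⟨k, l, i, j, h1, h2, ⟨h3, hi, hj⟩, rfl⟩)

end Aux13


/-- in the leaf-order setup,
`𝔍_G = 𝔍_{G'} ∩ ((x_{kj} : j ∈ A) + 𝔍_{G''})`. -/
theorem gbei_eq_inf_decomposition (K : Type) [Field K] (m : ℕ) (hm : 2 ≤ m)
    (n r q α : ℕ) (hn : 2 ≤ n) (hr : 1 < r) (hq : 1 ≤ q) (hα : 1 ≤ α)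
    (G : SimpleGraph (Fin n)) (hGconn : G.Connected) (hgb : IsGeneralizedBlockGraph G)
    (F : Fin r → Finset (Fin n))
    (hmc : ∀ i, IsMaxClique G (F i))
    (hFinj : Function.Injective F)
    (hFall : ∀ s : Finset (Fin n), IsMaxClique G s → ∃ i, F i = s)
    (lst : Fin r) (hlst : ∀ i : Fin r, i ≤ lst)
    (hleaf : ∀ i : Fin r, (i : ℕ) ≠ 0 → ∃ j, j < i ∧ ∀ k, k < i → F k ∩ F i ⊆ F j ∩ F i)
    (t : Fin q → Fin r) (htinj : Function.Injective t) (htne : ∀ i, t i ≠ lst)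
    (hbr : ∀ k : Fin r, k ≠ lst → ((∃ i, t i = k) ↔ (F k ∩ F lst).Nonempty))
    (A : Finset (Fin n)) (hcard : A.card = α)
    (hA1 : ∀ i, F (t i) ∩ F lst = A)
    (hA2 : ∀ i j, i ≠ j → F (t i) ∩ F (t j) = A)
    (G' : SimpleGraph (Fin n))
    (hG' : G' = G ⊔ cliqueOn (F lst ∪ Finset.univ.biUnion fun i => F (t i))) :
    gbei K m G = gbei K m G' ⊓ (varsIdeal K m A + gbei K m (delVerts G A)) := by
  subst hG'
  -- every vertex of the merged block `B` is adjacent in `G` to every (other) vertex of `A`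
  have hAadj : ∀ u ∈ (F lst ∪ Finset.univ.biUnion fun i => F (t i)),
      ∀ a ∈ A, a ≠ u → G.Adj a u := by
    intro u hu a ha hne
    rcases Finset.mem_union.mp hu with h | h
    · have haF : a ∈ F lst := by
        rw [← hA1 ⟨0, hq⟩] at ha
        exact (Finset.mem_inter.mp ha).2
      exact (hmc lst).1 (Finset.mem_coe.mpr haF) (Finset.mem_coe.mpr h) hne
    · obtain ⟨i, -, hi⟩ := Finset.mem_biUnion.mp h
      have haF : a ∈ F (t i) := by
        rw [← hA1 i] at ha
        exact (Finset.mem_inter.mp ha).1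
      exact (hmc (t i)).1 (Finset.mem_coe.mpr haF) (Finset.mem_coe.mpr hi) hne
  have E1 : gbei K m G ≤
      gbei K m (G ⊔ cliqueOn (F lst ∪ Finset.univ.biUnion fun i => F (t i))) :=
    gbei_mono K fun i j h => (SimpleGraph.sup_adj _ _ i j).mpr (Or.inl h)
  have C1 : gbei K m (G ⊔ cliqueOn (F lst ∪ Finset.univ.biUnion fun i => F (t i))) ≤
      gbei K m G ⊔ Nideal K m G A := by
    apply Ideal.span_le.mpr
    rintro f ⟨k, l, i, j, hkl, hij, hadj, rfl⟩
    rcases (SimpleGraph.sup_adj _ _ i j).mp hadj with hg | hc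
    · exact Submodule.mem_sup_left (Ideal.subset_span ⟨k, l, i, j, hkl, hij, hg, rfl⟩)
    · by_cases hg2 : G.Adj i j
      · exact Submodule.mem_sup_left (Ideal.subset_span ⟨k, l, i, j, hkl, hij, hg2, rfl⟩)
      · obtain ⟨hne, hiB, hjB⟩ := hc
        have hiA : i ∉ A := fun h => hg2 (hAadj j hjB i h hne)
        have hjA : j ∉ A := fun h => hg2 ((hAadj i hiB j h hne.symm).symm)
        refine Submodule.mem_sup_right (Ideal.subset_span
          ⟨k, l, i, j, hkl.ne, hiA, hjA, ?_, ?_, rfl⟩)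
        · exact fun a ha => hAadj i hiB a ha (fun e => hiA (e ▸ ha))
        · exact fun a ha => hAadj j hjB a ha (fun e => hjA (e ▸ ha))
  apply le_antisymm
  · exact le_inf E1 (gbei_le_vars_add_del K G A)
  · intro f hf
    obtain ⟨hf1, hf2⟩ := Submodule.mem_inf.mp hf
    obtain ⟨g, hg, h, hh, hgh⟩ := Submodule.mem_sup.mp (C1 hf1)
    have hhP : h ∈ varsIdeal K m A + gbei K m (delVerts G A) := by
      have heq : h = f - g := by rw [← hgh]; ring
      rw [heq]
      exact Ideal.sub_mem _ hf2 (gbei_le_vars_add_del K G A hg)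
    rw [Ideal.add_eq_sup, Submodule.mem_sup] at hhP
    obtain ⟨p, hpm, jj, hjm, hpj⟩ := hhP
    have hpih : piA K m A h ∈ gbei K m (delVerts G A) := by
      rw [← hpj, map_add, piA_varsIdeal K A hpm, zero_add]
      exact piA_delVerts K G A hjm
    have heq : f = g + ((h - piA K m A h) + piA K m A h) := by rw [← hgh]; ring
    rw [heq]
    exact Ideal.add_mem _ hg (Ideal.add_mem _ (sub_piA_Nideal K G A hh)
      (gbei_delVerts_le K G A hpih))


end GBEI
end
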